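/- Let r be positive and non-increasing on (x', x*), where x* is the unique zero of f between consecutive zeros x' < x'' of f'. Then for any initial guess x₀ ∈ (x', x*), the Halley iterates x_{n+1} = x_n − 2h(x_n)/(2 + r(x_n)h(x_n)²) form a monotonically increasing sequence bounded above by x* that converges to x*. -/

import Mathlib

open Set

lemma key (r f : ℝ → ℝ) (x' x'' xs : ℝ)
    (hr : ContDiff ℝ 1 r)
    (hf1 : Differentiable ℝ f) (hf2 : Differentiable ℝ (deriv f))
    (hode : ∀ t ∈ Set.Ioo x' x'', deriv (deriv f) t + r t * f t = 0)
    (hxs : xs ∈ Set.Ioo x' x'') (hfxs : f xs = 0)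
    (hrpos : ∀ t ∈ Set.Ioo x' xs, 0 < r t)
    (hrdec : ∀ t ∈ Set.Ioo x' xs, deriv r t ≤ 0)
    (hdpos : ∀ t ∈ Set.Ioo x' x'', 0 < deriv f t)
    (b : ℝ) (hb : b ∈ Set.Ioo x' xs) :
    b < b - 2 * (f b / deriv f b) / (2 + r b * (f b / deriv f b) ^ 2) ∧
    b - 2 * (f b / deriv f b) / (2 + r b * (f b / deriv f b) ^ 2) < xs := by
  have hsub : Set.Ioo x' xs ⊆ Set.Ioo x' x'' := Set.Ioo_subset_Ioo le_rfl hxs.2.le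
  -- f is negative on (x', xs)
  have hmono : StrictMonoOn f (Set.Icc x' x'') := by
    apply strictMonoOn_of_deriv_pos (convex_Icc _ _) hf1.continuous.continuousOn
    intro t ht
    rw [interior_Icc] at ht
    exact hdpos t ht
  have hfneg : ∀ t ∈ Set.Ioo x' xs, f t < 0 := by
    intro t ht
    have := hmono (Set.mem_Icc.2 ⟨ht.1.le, (ht.2.trans hxs.2).le⟩)
      (Set.mem_Icc.2 ⟨hxs.1.le, hxs.2.le⟩) ht.2
    linarith [hfxs]
  set s : ℝ → ℝ := fun t => Real.sqrt (deriv f t) with hs_def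
  set F : ℝ → ℝ := fun t => f t / s t with hF_def
  set F1 : ℝ → ℝ := fun t => s t + r t * (f t) ^ 2 / (2 * deriv f t * s t) with hF1_def
  set F2 : ℝ → ℝ := fun t => r t * f t / (2 * s t)
    + deriv r t * (f t) ^ 2 / (2 * deriv f t * s t)
    + (3 / 4) * (r t) ^ 2 * (f t) ^ 3 / ((deriv f t) ^ 2 * s t) with hF2_def
  have hspos : ∀ t ∈ Set.Ioo x' x'', 0 < s t := fun t ht => Real.sqrt_pos.2 (hdpos t ht)
  have hsder : ∀ t ∈ Set.Ioo x' x'',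
      HasDerivAt s (1 / (2 * s t) * deriv (deriv f) t) t := by
    intro t ht
    exact (Real.hasDerivAt_sqrt (hdpos t ht).ne').comp t (hf2 t).hasDerivAt
  have hF1d : ∀ t ∈ Set.Ioo x' x'', HasDerivAt F (F1 t) t := by
    intro t ht
    have hd := hdpos t ht
    have hsp := hspos t ht
    have hsq : deriv f t = (s t) ^ 2 := (Real.sq_sqrt hd.le).symm
    have h2 : deriv (deriv f) t = -(r t * f t) := by
      have := hode t ht; linarith
    have := ((hf1 t).hasDerivAt.div (hsder t ht) hsp.ne')
    refine this.congr_deriv ?_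
    rw [h2]
    rw [hF1_def]
    field_simp
    rw [hsq]
    ring
  have hF2d : ∀ t ∈ Set.Ioo x' x'', HasDerivAt F1 (F2 t) t := by
    intro t ht
    have hd := hdpos t ht
    have hsp := hspos t ht
    have hsq : deriv f t = (s t) ^ 2 := (Real.sq_sqrt hd.le).symm
    have h2 : deriv (deriv f) t = -(r t * f t) := by
      have := hode t ht; linarith
    have hrd : HasDerivAt r (deriv r t) t := ((hr.differentiable one_ne_zero) t).hasDerivAt
    have hnum : HasDerivAt (fun u => r u * (f u) ^ 2)
        (deriv r t * (f t) ^ 2 + r t * (2 * f t * deriv f t)) t := by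
      have := hrd.mul (((hf1 t).hasDerivAt).pow 2)
      refine this.congr_deriv ?_
      norm_num
    have hden : HasDerivAt (fun u => 2 * deriv f u * s u)
        (2 * deriv (deriv f) t * s t + 2 * deriv f t * (1 / (2 * s t) * deriv (deriv f) t)) t := by
      exact (((hf2 t).hasDerivAt.const_mul 2).mul (hsder t ht))
    have hdenne : 2 * deriv f t * s t ≠ 0 := by positivity
    have := (hsder t ht).add (hnum.div hden hdenne)
    refine this.congr_deriv ?_
    rw [h2, hF2_def]
    field_simp
    rw [hsq]
    ring
  have hF2neg : ∀ t ∈ Set.Ioo x' xs, F2 t < 0 := by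
    intro t ht
    have ht' := hsub ht
    have hd := hdpos t ht'
    have hsp := hspos t ht'
    have hfn := hfneg t ht
    have hrp := hrpos t ht
    have hrd := hrdec t ht
    have h1 : r t * f t / (2 * s t) < 0 :=
      div_neg_of_neg_of_pos (mul_neg_of_pos_of_neg hrp hfn) (by positivity)
    have h2 : deriv r t * (f t) ^ 2 / (2 * deriv f t * s t) ≤ 0 :=
      div_nonpos_of_nonpos_of_nonneg (mul_nonpos_of_nonpos_of_nonneg hrd (sq_nonneg _))
        (by positivity)
    have h3 : (3 / 4 : ℝ) * (r t) ^ 2 * (f t) ^ 3 / ((deriv f t) ^ 2 * s t) < 0 := by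
      apply div_neg_of_neg_of_pos _ (by positivity)
      have hf3 : (f t) ^ 3 < 0 := by
        have h2 : (0:ℝ) < (f t) ^ 2 := by nlinarith
        have : (f t) ^ 3 = f t * (f t) ^ 2 := by ring
        rw [this]
        exact mul_neg_of_neg_of_pos hfn h2
      have hc : (0:ℝ) < (3 / 4 : ℝ) * (r t) ^ 2 := by positivity
      exact mul_neg_of_pos_of_neg hc hf3
    rw [hF2_def]
    dsimp only
    linarith
  -- facts at b
  have hbI : b ∈ Set.Ioo x' x'' := hsub hb
  have hdb := hdpos b hbI
  have hsb := hspos b hbI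
  have hfb := hfneg b hb
  have hrb := hrpos b hb
  have hsqb : deriv f b = (s b) ^ 2 := (Real.sq_sqrt hdb.le).symm
  have hFb : F b < 0 := div_neg_of_neg_of_pos hfb hsb
  have hF1b : 0 < F1 b := by
    rw [hF1_def]
    have : 0 ≤ r b * (f b) ^ 2 / (2 * deriv f b * s b) := by positivity
    dsimp only
    linarith
  have hdenb : (0:ℝ) < 2 + r b * (f b / deriv f b) ^ 2 := by positivity
  have hNewton : 2 * (f b / deriv f b) / (2 + r b * (f b / deriv f b) ^ 2) = F b / F1 b := by
    rw [div_eq_div_iff hdenb.ne' hF1b.ne']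
    simp only [hF_def, hF1_def]
    rw [hsqb]
    field_simp
  refine ⟨?_, ?_⟩
  · have : F b / F1 b < 0 := div_neg_of_neg_of_pos hFb hF1b
    rw [hNewton]
    linarith
  · rw [hNewton]
    -- MVT for F on [b, xs]
    have hIccsub : Set.Icc b xs ⊆ Set.Ioo x' x'' :=
      fun t ht => ⟨lt_of_lt_of_le hb.1 ht.1, lt_of_le_of_lt ht.2 hxs.2⟩
    have hcont : ContinuousOn F (Set.Icc b xs) :=
      fun t ht => ((hF1d t (hIccsub ht)).continuousAt).continuousWithinAt
    obtain ⟨c, hc, hceq⟩ := exists_hasDerivAt_eq_slope F F1 hb.2 hcont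
      (fun t ht => hF1d t (hIccsub (Set.mem_Icc.2 ⟨ht.1.le, ht.2.le⟩)))
    -- MVT for F1 on [b, c]
    have hIccsub2 : Set.Icc b c ⊆ Set.Ioo x' x'' :=
      fun t ht => ⟨lt_of_lt_of_le hb.1 ht.1, lt_of_le_of_lt ht.2 ((hc.2.trans hxs.2))⟩
    have hcont2 : ContinuousOn F1 (Set.Icc b c) :=
      fun t ht => ((hF2d t (hIccsub2 ht)).continuousAt).continuousWithinAt
    obtain ⟨ξ, hξ, hξeq⟩ := exists_hasDerivAt_eq_slope F1 F2 hc.1 hcont2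
      (fun t ht => hF2d t (hIccsub2 (Set.mem_Icc.2 ⟨ht.1.le, ht.2.le⟩)))
    have hξneg : F2 ξ < 0 := hF2neg ξ ⟨lt_trans hb.1 hξ.1, lt_trans hξ.2 hc.2⟩
    have hF1c : F1 c < F1 b := by
      rw [hξeq] at hξneg
      have hcb : 0 < c - b := by linarith [hc.1]
      have := (div_neg_iff.1 hξneg)
      rcases this with ⟨h1, h2⟩ | ⟨h1, h2⟩
      · linarith
      · linarith
    have hFxs : F xs = 0 := by simp only [hF_def]; rw [hfxs]; simp
    rw [hFxs] at hceq
    have hxsb : 0 < xs - b := by linarith [hb.2]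
    have hslope : (0 - F b) / (xs - b) < F1 b := by rw [← hceq]; exact hF1c
    rw [div_lt_iff₀ hxsb] at hslope
    have : F b / F1 b > -(xs - b) := by
      rw [gt_iff_lt, neg_lt, ← neg_div]
      rw [div_lt_iff₀ hF1b]
      nlinarith
    linarith

lemma sign_const {g : ℝ → ℝ} (hg : Continuous g) {a b c : ℝ} (hc : c ∈ Set.Ioo a b)
    (h0 : ∀ t ∈ Set.Ioo a b, g t ≠ 0) (hpos : 0 < g c) : ∀ t ∈ Set.Ioo a b, 0 < g t := by
  intro t ht
  by_contra h
  push_neg at h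
  have hneg : g t < 0 := lt_of_le_of_ne h (h0 t ht)
  have hsub : Set.uIcc t c ⊆ Set.Ioo a b := Set.ordConnected_Ioo.uIcc_subset ht hc
  have h0m : (0:ℝ) ∈ Set.uIcc (g t) (g c) := Set.mem_uIcc.2 (Or.inl ⟨hneg.le, hpos.le⟩)
  obtain ⟨u, hu, hu0⟩ := intermediate_value_uIcc hg.continuousOn h0m
  exact h0 u (hsub hu) hu0



theorem halley_nonlocal_convergence (r f : ℝ → ℝ) (x' x'' xs x₀ : ℝ) (x : ℕ → ℝ)
    (hr : ContDiff ℝ 1 r)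
    (hf1 : Differentiable ℝ f) (hf2 : Differentiable ℝ (deriv f))
    (hode : ∀ t ∈ Set.Ioo x' x'', deriv (deriv f) t + r t * f t = 0)
    (hnt : ∃ t ∈ Set.Ioo x' x'', f t ≠ 0)
    (hlt : x' < x'')
    (hz' : deriv f x' = 0) (hz'' : deriv f x'' = 0)
    (hcons : ∀ t ∈ Set.Ioo x' x'', deriv f t ≠ 0)
    (hxs : xs ∈ Set.Ioo x' x'') (hfxs : f xs = 0)
    (huniq : ∀ t ∈ Set.Ioo x' x'', f t = 0 → t = xs)
    (hrpos : ∀ t ∈ Set.Ioo x' xs, 0 < r t)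
    (hrdec : ∀ t ∈ Set.Ioo x' xs, deriv r t ≤ 0)
    (hx0 : x₀ ∈ Set.Ioo x' xs)
    (hseq0 : x 0 = x₀)
    (hseq : ∀ n, x (n + 1) = x n
      - 2 * (f (x n) / deriv f (x n)) / (2 + r (x n) * (f (x n) / deriv f (x n)) ^ 2)) :
    Monotone x ∧ (∀ n, x n < xs) ∧ Filter.Tendsto x Filter.atTop (nhds xs) := by
  have hdcont : Continuous (deriv f) := hf2.continuous
  have key' : ∀ b ∈ Set.Ioo x' xs,
      b < b - 2 * (f b / deriv f b) / (2 + r b * (f b / deriv f b) ^ 2) ∧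
      b - 2 * (f b / deriv f b) / (2 + r b * (f b / deriv f b) ^ 2) < xs := by
    rcases (hcons xs hxs).lt_or_gt with hneg | hpos
    · -- deriv f < 0 everywhere; apply key to -f
      have hdneg : ∀ t ∈ Set.Ioo x' x'', 0 < -deriv f t := by
        apply sign_const hdcont.neg hxs
        · intro t ht; exact neg_ne_zero.2 (hcons t ht)
        · exact neg_pos.2 hneg
      have hdg : deriv (fun t => -f t) = fun t => -deriv f t := funext fun t => deriv.neg
      have hg2 : Differentiable ℝ (deriv (fun t => -f t)) := by rw [hdg]; exact hf2.neg
      have hodeg : ∀ t ∈ Set.Ioo x' x'',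
          deriv (deriv (fun t => -f t)) t + r t * (-f t) = 0 := by
        intro t ht
        have h1 : deriv (deriv (fun t => -f t)) t = -deriv (deriv f) t := by
          rw [hdg]; exact deriv.neg
        have := hode t ht
        rw [h1]; linarith
      have hdgpos : ∀ t ∈ Set.Ioo x' x'', 0 < deriv (fun t => -f t) t := by
        intro t ht; rw [hdg]; exact hdneg t ht
      intro b hb
      have h := key r (fun t => -f t) x' x'' xs hr hf1.neg hg2 hodeg hxs
        (by simp [hfxs]) hrpos hrdec hdgpos b hb
      have hrw : (-f b) / (deriv (fun t => -f t) b) = f b / deriv f b := by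
        rw [hdg]; exact neg_div_neg_eq _ _
      rw [hrw] at h
      exact h
    · intro b hb
      exact key r f x' x'' xs hr hf1 hf2 hode hxs hfxs hrpos hrdec
        (sign_const hdcont hxs hcons hpos) b hb
  have hIoo : ∀ n, x n ∈ Set.Ioo x' xs := by
    intro n
    induction n with
    | zero => rw [hseq0]; exact hx0
    | succ n ih =>
      have h := key' (x n) ih
      rw [← hseq n] at h
      exact ⟨lt_trans ih.1 h.1, h.2⟩
  have hstep : ∀ n, x n < x (n + 1) := by
    intro n
    have h := key' (x n) (hIoo n)
    rw [← hseq n] at h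
    exact h.1
  have hmono : Monotone x := monotone_nat_of_le_succ fun n => (hstep n).le
  have hbnd : ∀ n, x n < xs := fun n => (hIoo n).2
  refine ⟨hmono, hbnd, ?_⟩
  have hbddA : BddAbove (Set.range x) := ⟨xs, by rintro _ ⟨n, rfl⟩; exact (hbnd n).le⟩
  have hT : Filter.Tendsto x Filter.atTop (nhds (⨆ n, x n)) := tendsto_atTop_ciSup hmono hbddA
  set L := ⨆ n, x n with hLdef
  have hx0L : x 0 ≤ L := le_ciSup hbddA 0
  have hL1 : x' < L := lt_of_lt_of_le (by rw [hseq0]; exact hx0.1) hx0L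
  have hL2 : L ≤ xs := ciSup_le fun n => (hbnd n).le
  have hLI : L ∈ Set.Ioo x' x'' := ⟨hL1, lt_of_le_of_lt hL2 hxs.2⟩
  have hdL : deriv f L ≠ 0 := hcons L hLI
  have hrL : 0 ≤ r L := by
    have h1 : Filter.Tendsto (fun n => r (x n)) Filter.atTop (nhds (r L)) :=
      (hr.continuous.continuousAt).tendsto.comp hT
    exact ge_of_tendsto h1 (Filter.Eventually.of_forall fun n => (hrpos _ (hIoo n)).le)
  have hden : (0:ℝ) < 2 + r L * (f L / deriv f L) ^ 2 := by
    nlinarith [mul_nonneg hrL (sq_nonneg (f L / deriv f L))]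
  have hcg : ContinuousAt
      (fun t => t - 2 * (f t / deriv f t) / (2 + r t * (f t / deriv f t) ^ 2)) L := by
    have hq : ContinuousAt (fun t => f t / deriv f t) L :=
      (hf1.continuous.continuousAt).div hdcont.continuousAt hdL
    exact continuousAt_id.sub ((continuousAt_const.mul hq).div
      (continuousAt_const.add ((hr.continuous.continuousAt).mul (hq.pow 2))) hden.ne')
  have hT1 : Filter.Tendsto (fun n => x (n + 1)) Filter.atTop (nhds L) :=
    hT.comp (Filter.tendsto_add_atTop_nat 1)
  have hT2 : Filter.Tendsto
      (fun n => x n - 2 * (f (x n) / deriv f (x n)) / (2 + r (x n) * (f (x n) / deriv f (x n)) ^ 2))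
      Filter.atTop (nhds (L - 2 * (f L / deriv f L) / (2 + r L * (f L / deriv f L) ^ 2))) :=
    hcg.tendsto.comp hT
  have heq : (fun n => x (n + 1)) =
      fun n => x n - 2 * (f (x n) / deriv f (x n))
        / (2 + r (x n) * (f (x n) / deriv f (x n)) ^ 2) := funext fun n => hseq n
  rw [heq] at hT1
  have hgL : L - 2 * (f L / deriv f L) / (2 + r L * (f L / deriv f L) ^ 2) = L :=
    tendsto_nhds_unique hT2 hT1
  have hfL : f L = 0 := by
    have h0 : 2 * (f L / deriv f L) / (2 + r L * (f L / deriv f L) ^ 2) = 0 := by linarith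
    rcases div_eq_zero_iff.1 h0 with h | h
    · have : f L / deriv f L = 0 := by linarith
      rcases div_eq_zero_iff.1 this with h' | h'
      · exact h'
      · exact absurd h' hdL
    · exact absurd h hden.ne'
  have hLxs : L = xs := huniq L hLI hfL
  rw [← hLxs]
  exact hT
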